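/- Let n < β < n+2 and 0 < δ ≤ 1. Then there exist constants c₁ > 0 and c₂ > 0 (independent of δ) such that for all ν ∈ ℝⁿ, m^{δ,β}(ν) ≤ max{−c₁‖ν‖^{β−n}, −c₂‖ν‖²}. -/

import Mathlib

open MeasureTheory

/-- The peridynamic scaling constant `c^{δ,β}`. -/
noncomputable def pdConst (n : ℕ) (δ β : ℝ) : ℝ :=
  2 * ((n : ℝ) + 2 - β) * Real.Gamma ((n : ℝ) / 2 + 1) /
    (Real.pi ^ ((n : ℝ) / 2) * δ ^ ((n : ℝ) + 2 - β))

/-- The Fourier multiplier `m^{δ,β}(ν)` of the nonlocal Laplacian. -/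
noncomputable def pdMultiplier (n : ℕ) (δ β : ℝ) (ν : EuclideanSpace ℝ (Fin n)) : ℝ :=
  pdConst n δ β *
    ∫ z in Metric.ball (0 : EuclideanSpace ℝ (Fin n)) δ,
      (Real.cos (inner ℝ ν z) - 1) / ‖z‖ ^ β

section Aux

open Metric Set
open scoped RealInnerProductSpace

variable {n : ℕ}

lemma pd_measurable_rpow_const (p : ℝ) : Measurable (fun x : ℝ => |x| ^ p) := by
  have h : (fun x : ℝ => |x| ^ p) = fun x =>
      if x = 0 then (0:ℝ) ^ p else Real.exp (Real.log |x| * p) := by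
    funext x
    by_cases hx : x = 0
    · simp [hx]
    · rw [if_neg hx, Real.rpow_def_of_pos (abs_pos.2 hx)]
  rw [h]
  exact Measurable.ite (measurableSet_eq) measurable_const
    (Real.measurable_exp.comp ((Real.measurable_log.comp measurable_abs).mul_const p))

lemma pd_measurable_norm_rpow (p : ℝ) :
    Measurable (fun z : EuclideanSpace ℝ (Fin n) => ‖z‖ ^ p) := by
  have h := (pd_measurable_rpow_const p).comp
    (measurable_norm : Measurable (fun z : EuclideanSpace ℝ (Fin n) => ‖z‖))
  simp only [Function.comp_def, abs_of_nonneg (norm_nonneg _)] at h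
  exact h

lemma pd_euclid_nontrivial (hn : 1 ≤ n) : Nontrivial (EuclideanSpace ℝ (Fin n)) :=
  ⟨0, EuclideanSpace.single ⟨0, hn⟩ (1:ℝ), by
    intro h
    have := congrArg (fun w : EuclideanSpace ℝ (Fin n) => ‖w‖) h
    simp [EuclideanSpace.norm_single] at this⟩

lemma pd_ae_ne_zero (hn : 1 ≤ n) :
    ∀ᵐ z : EuclideanSpace ℝ (Fin n) ∂volume, z ≠ 0 := by
  haveI := pd_euclid_nontrivial hn
  rw [ae_iff]
  have : {z : EuclideanSpace ℝ (Fin n) | ¬ z ≠ 0} = {0} := by ext z; simp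
  rw [this]
  exact measure_singleton 0

lemma pd_cos_sub_one_le_neg_sq {t : ℝ} (h : |t| ≤ 1) :
    Real.cos t - 1 ≤ -(43/96) * t^2 := by
  have hb := Real.cos_bound h
  have h1 : |t|^4 ≤ t^2 := by
    have h2 : t^2 ≤ 1 := by nlinarith [abs_nonneg t, sq_abs t]
    nlinarith [sq_abs t, sq_nonneg t]
  rw [abs_le] at hb
  nlinarith [hb.2]

lemma pd_abs_cos_sub_one_le (t : ℝ) : |Real.cos t - 1| ≤ t^2/2 := by
  rcases eq_or_ne t 0 with rfl | ht
  · simp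
  · have h1 := Real.one_sub_sq_div_two_lt_cos (x := t) ht
    have h2 := Real.cos_le_one t
    rw [abs_le]; constructor <;> nlinarith

lemma pd_integrableOn_norm_rpow_ball (hn : 1 ≤ n) {p : ℝ} (hp : -(n:ℝ) < p) {r : ℝ}
    (hr : 0 < r) :
    IntegrableOn (fun z : EuclideanSpace ℝ (Fin n) => ‖z‖ ^ p) (ball 0 r) := by
  haveI : Nonempty (Fin n) := ⟨⟨0, hn⟩⟩
  haveI : Nontrivial (EuclideanSpace ℝ (Fin n)) := pd_euclid_nontrivial hn
  have hmeas := pd_measurable_norm_rpow (n := n) p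
  rcases le_or_gt 0 p with hp0 | hp0
  · have hc : Continuous (fun z : EuclideanSpace ℝ (Fin n) => ‖z‖ ^ p) :=
      continuous_norm.rpow_const (fun x => Or.inr hp0)
    exact (hc.locallyIntegrable.integrableOn_isCompact (isCompact_closedBall 0 r)).mono_set
      ball_subset_closedBall
  · refine ⟨hmeas.aestronglyMeasurable, ?_⟩
    rw [hasFiniteIntegral_iff_norm]
    have hnorm : ∀ z : EuclideanSpace ℝ (Fin n),
        ENNReal.ofReal ‖‖z‖ ^ p‖ = ENNReal.ofReal (‖z‖ ^ p) := by
      intro z; rw [Real.norm_of_nonneg (Real.rpow_nonneg (norm_nonneg _) _)]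
    simp only [hnorm]
    set q : ℝ := 1/2 with hq
    have hq0 : 0 < q := by norm_num
    have hq1 : q < 1 := by norm_num
    set S : ℕ → Set (EuclideanSpace ℝ (Fin n)) :=
      fun k => {z | r * q ^ (k+1) ≤ ‖z‖ ∧ ‖z‖ < r * q ^ k} with hS
    have hsub : ball (0 : EuclideanSpace ℝ (Fin n)) r ⊆ {0} ∪ ⋃ k, S k := by
      intro z hz
      rcases eq_or_ne z 0 with rfl | hz0
      · exact Or.inl rfl
      · have hz' : ‖z‖ < r := by simpa [dist_eq_norm] using hz
        have hzpos : 0 < ‖z‖ := norm_pos_iff.2 hz0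
        have hex : ∃ k : ℕ, r * q ^ (k+1) ≤ ‖z‖ := by
          obtain ⟨k, hk⟩ := exists_pow_lt_of_lt_one (div_pos hzpos hr) hq1
          refine ⟨k, ?_⟩
          have h2 : q ^ (k+1) ≤ q ^ k := pow_le_pow_of_le_one hq0.le hq1.le (Nat.le_succ k)
          have := (lt_div_iff₀ hr).mp hk
          nlinarith
        classical
        set k₀ := Nat.find hex with hk₀
        refine Or.inr (mem_iUnion.2 ⟨k₀, ⟨Nat.find_spec hex, ?_⟩⟩)
        rcases Nat.eq_zero_or_pos k₀ with h0 | h0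
        · rw [h0]; simpa using hz'
        · have hmin := Nat.find_min hex (m := k₀ - 1) (by omega)
          have : k₀ - 1 + 1 = k₀ := by omega
          rw [this] at hmin
          exact lt_of_not_ge hmin
    have hSm : ∀ k, S k ⊆ ball (0 : EuclideanSpace ℝ (Fin n)) (r * q ^ k) := by
      intro k z hz
      simpa [dist_eq_norm] using hz.2
    set B := volume (ball (0 : EuclideanSpace ℝ (Fin n)) 1) with hB
    have hBfin : B < ⊤ := measure_ball_lt_top
    have hann : ∀ k, (∫⁻ z in S k, ENNReal.ofReal (‖z‖ ^ p)) ≤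
        ENNReal.ofReal ((r * q ^ (k+1)) ^ p) * (ENNReal.ofReal ((r * q ^ k) ^ n) * B) := by
      intro k
      have h1 : (∫⁻ z in S k, ENNReal.ofReal (‖z‖ ^ p)) ≤
          ∫⁻ _ in S k, ENNReal.ofReal ((r * q ^ (k+1)) ^ p) := by
        apply setLIntegral_mono measurable_const
        intro z hz
        apply ENNReal.ofReal_le_ofReal
        exact Real.rpow_le_rpow_of_nonpos (by positivity) hz.1 hp0.le
      rw [setLIntegral_const] at h1
      refine h1.trans ?_
      apply mul_le_mul_right ?_
      calc volume (S k) ≤ volume (ball (0 : EuclideanSpace ℝ (Fin n)) (r * q ^ k)) :=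
            measure_mono (hSm k)
        _ = ENNReal.ofReal ((r * q ^ k) ^ Module.finrank ℝ (EuclideanSpace ℝ (Fin n))) * B :=
            Measure.addHaar_ball _ _ (by positivity)
        _ = ENNReal.ofReal ((r * q ^ k) ^ n) * B := by rw [finrank_euclideanSpace_fin]
    set Q : ℝ := q ^ p with hQ
    have hQ0 : 0 < Q := Real.rpow_pos_of_pos hq0 _
    have hkey : ∀ k : ℕ, (r * q ^ (k+1)) ^ p * (r * q ^ k) ^ n
        = (r ^ p * Q * r ^ (n:ℕ)) * (Q * q ^ n) ^ k := by
      intro k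
      have h1 : (r * q ^ (k+1)) ^ p = r ^ p * Q ^ (k+1) := by
        rw [Real.mul_rpow hr.le (by positivity), hQ, ← Real.rpow_natCast q (k+1),
          ← Real.rpow_mul hq0.le, mul_comm ((k+1:ℕ):ℝ) p, Real.rpow_mul hq0.le,
          Real.rpow_natCast]
      rw [h1]
      ring
    calc (∫⁻ z in ball (0:EuclideanSpace ℝ (Fin n)) r, ENNReal.ofReal (‖z‖ ^ p))
        ≤ ∫⁻ z in ({0} ∪ ⋃ k, S k), ENNReal.ofReal (‖z‖ ^ p) := lintegral_mono_set hsub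
      _ ≤ (∫⁻ z in ({0} : Set (EuclideanSpace ℝ (Fin n))), ENNReal.ofReal (‖z‖ ^ p))
            + ∫⁻ z in (⋃ k, S k), ENNReal.ofReal (‖z‖ ^ p) := lintegral_union_le _ _ _
      _ = ∫⁻ z in (⋃ k, S k), ENNReal.ofReal (‖z‖ ^ p) := by
            rw [setLIntegral_measure_zero _ _ (measure_singleton 0), zero_add]
      _ ≤ ∑' k, ∫⁻ z in S k, ENNReal.ofReal (‖z‖ ^ p) := lintegral_iUnion_le _ _
      _ ≤ ∑' k, ENNReal.ofReal ((r * q ^ (k+1)) ^ p) * (ENNReal.ofReal ((r * q ^ k) ^ n) * B) :=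
            ENNReal.tsum_le_tsum hann
      _ = ∑' k, ENNReal.ofReal ((r ^ p * Q * r ^ (n:ℕ)) * (Q * q ^ n) ^ k) * B := by
            congr 1; funext k
            rw [← mul_assoc, ← ENNReal.ofReal_mul (by positivity), hkey k]
      _ = ∑' k, (ENNReal.ofReal (r ^ p * Q * r ^ (n:ℕ)) * ENNReal.ofReal (Q * q ^ n) ^ k) * B := by
            congr 1; funext k
            rw [← ENNReal.ofReal_pow (by positivity), ← ENNReal.ofReal_mul (by positivity)]
      _ = (ENNReal.ofReal (r ^ p * Q * r ^ (n:ℕ)) * B) * ∑' k, ENNReal.ofReal (Q * q ^ n) ^ k := by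
            rw [← ENNReal.tsum_mul_left]
            congr 1; funext k; ring
      _ < ⊤ := by
            have hx1 : ENNReal.ofReal (Q * q ^ n) < 1 := by
              rw [ENNReal.ofReal_lt_one]
              have : Q * q ^ n = q ^ (p + n) := by
                rw [hQ, ← Real.rpow_natCast q n, ← Real.rpow_add hq0]
              rw [this]
              apply Real.rpow_lt_one hq0.le hq1
              have : (0:ℝ) < (n:ℝ) + p := by linarith
              linarith
            have hsum : (∑' k, ENNReal.ofReal (Q * q ^ n) ^ k) < ⊤ := by
              rw [ENNReal.tsum_geometric]
              exact ENNReal.inv_lt_top.2 (tsub_pos_of_lt hx1)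
            exact ENNReal.mul_lt_top (ENNReal.mul_lt_top ENNReal.ofReal_lt_top hBfin) hsum

lemma pd_integrableOn_div_rpow (hn : 1 ≤ n) {β : ℝ} (hβ₂ : β < (n:ℝ) + 2) {r : ℝ} (hr : 0 < r)
    {num : EuclideanSpace ℝ (Fin n) → ℝ} (hc : Continuous num) {C : ℝ}
    (hC : ∀ z, |num z| ≤ C * ‖z‖^2) :
    IntegrableOn (fun z : EuclideanSpace ℝ (Fin n) => num z / ‖z‖ ^ β) (ball 0 r) := by
  have hp : -(n:ℝ) < 2 - β := by linarith
  refine Integrable.mono' ((pd_integrableOn_norm_rpow_ball hn hp hr).const_mul C)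
    ((hc.measurable.div (pd_measurable_norm_rpow β)).aestronglyMeasurable) ?_
  refine ae_restrict_of_ae ((pd_ae_ne_zero hn).mono fun z hz => ?_)
  have hz0 : 0 < ‖z‖ := norm_pos_iff.2 hz
  have hd : 0 < ‖z‖ ^ β := Real.rpow_pos_of_pos hz0 β
  have h1 : ‖num z / ‖z‖ ^ β‖ = |num z| / ‖z‖ ^ β := by
    rw [Real.norm_eq_abs, abs_div, abs_of_pos hd]
  rw [h1]
  calc |num z| / ‖z‖ ^ β ≤ (C * ‖z‖^2) / ‖z‖ ^ β := by gcongr; exact hC z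
    _ = C * ‖z‖ ^ ((2:ℝ) - β) := by
        rw [Real.rpow_sub hz0, Real.rpow_two, mul_div_assoc]

lemma pd_quad_integral_eq (hn : 1 ≤ n) (β r : ℝ) {ν : EuclideanSpace ℝ (Fin n)} (hν : ν ≠ 0) :
    ∫ z in ball (0 : EuclideanSpace ℝ (Fin n)) r, ⟪ν, z⟫^2 / ‖z‖ ^ β
      = ‖ν‖^2 * ∫ z in ball (0 : EuclideanSpace ℝ (Fin n)) r,
          ⟪EuclideanSpace.single (⟨0, hn⟩ : Fin n) (1:ℝ), z⟫^2 / ‖z‖ ^ β := by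
  set e₀ : EuclideanSpace ℝ (Fin n) := EuclideanSpace.single (⟨0, hn⟩ : Fin n) (1:ℝ) with he₀
  set u : EuclideanSpace ℝ (Fin n) := ‖ν‖⁻¹ • ν with hu
  have hνn : ‖ν‖ ≠ 0 := norm_ne_zero_iff.2 hν
  have hun : ‖u‖ = 1 := by
    rw [hu, norm_smul, norm_inv, norm_norm, inv_mul_cancel₀ hνn]
  have he₀n : ‖e₀‖ = 1 := by rw [he₀, EuclideanSpace.norm_single]; exact norm_one
  set f : EuclideanSpace ℝ (Fin n) ≃ₗᵢ[ℝ] EuclideanSpace ℝ (Fin n) :=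
    Submodule.reflection (ℝ ∙ (u - e₀))ᗮ with hf
  have hfu : f u = e₀ := Submodule.reflection_sub (by rw [hun, he₀n])
  set G : EuclideanSpace ℝ (Fin n) → ℝ := fun w => ⟪e₀, w⟫^2 / ‖w‖ ^ β with hG
  have hpt : ∀ z : EuclideanSpace ℝ (Fin n),
      ⟪ν, z⟫^2 / ‖z‖ ^ β = ‖ν‖^2 * G (f z) := by
    intro z
    have h1 : ⟪e₀, f z⟫ = ⟪u, z⟫ := by rw [← hfu, LinearIsometryEquiv.inner_map_map]
    have hsm : (‖ν‖ : ℝ) • u = ν := by rw [hu, smul_smul, mul_inv_cancel₀ hνn, one_smul]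
    have h2 : ⟪ν, z⟫ = ‖ν‖ * ⟪u, z⟫ := by
      conv_lhs => rw [← hsm]
      exact real_inner_smul_left _ _ _
    rw [hG]
    simp only [h1, LinearIsometryEquiv.norm_map, h2]
    ring
  rw [integral_congr_ae (Filter.Eventually.of_forall hpt), integral_const_mul]
  congr 1
  have hpre : f ⁻¹' (ball (0 : EuclideanSpace ℝ (Fin n)) r)
      = ball (0 : EuclideanSpace ℝ (Fin n)) r := by
    ext w
    simp [mem_ball, dist_eq_norm, f.norm_map]
  calc ∫ z in ball (0 : EuclideanSpace ℝ (Fin n)) r, G (f z)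
      = ∫ z in f ⁻¹' (ball (0 : EuclideanSpace ℝ (Fin n)) r), G (f z) := by rw [hpre]
    _ = ∫ w in ball (0 : EuclideanSpace ℝ (Fin n)) r, G w :=
        (f.measurePreserving).setIntegral_preimage_emb
          f.toHomeomorph.measurableEmbedding G _

lemma pd_quad_scaling {β : ℝ} {r : ℝ} (hr : 0 < r)
    (e₀ : EuclideanSpace ℝ (Fin n)) :
    ∫ z in ball (0 : EuclideanSpace ℝ (Fin n)) r, ⟪e₀, z⟫^2 / ‖z‖ ^ β
      = r ^ ((n:ℝ) + 2 - β) *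
        ∫ z in ball (0 : EuclideanSpace ℝ (Fin n)) 1, ⟪e₀, z⟫^2 / ‖z‖ ^ β := by
  set G : EuclideanSpace ℝ (Fin n) → ℝ := fun w => ⟪e₀, w⟫^2 / ‖w‖ ^ β with hG
  have hsmul : ∀ x : EuclideanSpace ℝ (Fin n), G (r • x) = r ^ ((2:ℝ) - β) * G x := by
    intro x
    rcases eq_or_ne x 0 with rfl | hx
    · simp [hG]
    · have hx0 : 0 < ‖x‖ := norm_pos_iff.2 hx
      have hden : ‖r • x‖ ^ β = r ^ β * ‖x‖ ^ β := by
        rw [norm_smul, Real.norm_eq_abs, abs_of_pos hr, Real.mul_rpow hr.le hx0.le]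
      have hnum : ⟪e₀, r • x⟫^2 = r^2 * ⟪e₀, x⟫^2 := by
        rw [real_inner_smul_right]; ring
      rw [hG]
      simp only [hnum, hden]
      rw [Real.rpow_sub hr, Real.rpow_two]
      field_simp
  have hcomp := Measure.setIntegral_comp_smul_of_pos (volume) G
    (ball (0 : EuclideanSpace ℝ (Fin n)) 1) hr
  rw [smul_unitBall_of_pos hr, finrank_euclideanSpace_fin] at hcomp
  simp only [hsmul] at hcomp
  rw [integral_const_mul] at hcomp
  have hrn : (0:ℝ) < r ^ n := by positivity
  rw [smul_eq_mul] at hcomp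
  have : ∫ z in ball (0 : EuclideanSpace ℝ (Fin n)) r, G z
      = (r ^ n) * (r ^ ((2:ℝ) - β) * ∫ z in ball (0 : EuclideanSpace ℝ (Fin n)) 1, G z) := by
    rw [hcomp, ← mul_assoc, mul_inv_cancel₀ hrn.ne', one_mul]
  rw [this, ← mul_assoc]
  congr 1
  rw [← Real.rpow_natCast r n, ← Real.rpow_add hr]
  congr 1
  ring

lemma pd_quad_pos (hn : 1 ≤ n) {β : ℝ} (hβ₂ : β < (n:ℝ) + 2) :
    0 < ∫ z in ball (0 : EuclideanSpace ℝ (Fin n)) 1,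
        ⟪EuclideanSpace.single (⟨0, hn⟩ : Fin n) (1:ℝ), z⟫^2 / ‖z‖ ^ β := by
  haveI := pd_euclid_nontrivial hn
  set e₀ : EuclideanSpace ℝ (Fin n) := EuclideanSpace.single (⟨0, hn⟩ : Fin n) (1:ℝ) with he₀
  have he₀n : ‖e₀‖ = 1 := by rw [he₀, EuclideanSpace.norm_single]; exact norm_one
  set G : EuclideanSpace ℝ (Fin n) → ℝ := fun w => ⟪e₀, w⟫^2 / ‖w‖ ^ β with hG
  have hcont : Continuous fun w : EuclideanSpace ℝ (Fin n) => ⟪e₀, w⟫^2 :=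
    (continuous_const.inner continuous_id).pow 2
  have hCb : ∀ z : EuclideanSpace ℝ (Fin n), |⟪e₀, z⟫^2| ≤ 1 * ‖z‖^2 := by
    intro z
    have := abs_real_inner_le_norm e₀ z
    rw [he₀n, one_mul] at this
    rw [abs_of_nonneg (sq_nonneg _), one_mul]
    nlinarith [abs_nonneg ⟪e₀, z⟫, sq_abs ⟪e₀, z⟫]
  have hint : IntegrableOn G (ball (0 : EuclideanSpace ℝ (Fin n)) 1) :=
    pd_integrableOn_div_rpow hn hβ₂ one_pos hcont hCb
  have hnonneg : 0 ≤ᵐ[volume.restrict (ball (0 : EuclideanSpace ℝ (Fin n)) 1)] G := by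
    refine ae_restrict_of_ae (Filter.Eventually.of_forall fun z => ?_)
    exact div_nonneg (sq_nonneg _) (Real.rpow_nonneg (norm_nonneg _) _)
  rw [setIntegral_pos_iff_support_of_nonneg_ae hnonneg hint]
  set T : Set (EuclideanSpace ℝ (Fin n)) := {z | ⟪e₀, z⟫ = 0} with hT
  have hTsub : T = ((ℝ ∙ e₀)ᗮ : Submodule ℝ (EuclideanSpace ℝ (Fin n))) := by
    ext z
    rw [SetLike.mem_coe, Submodule.mem_orthogonal_singleton_iff_inner_right]
    exact Iff.rfl
  have hTne : (ℝ ∙ e₀)ᗮ ≠ (⊤ : Submodule ℝ (EuclideanSpace ℝ (Fin n))) := by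
    intro h
    have he : e₀ ∈ (ℝ ∙ e₀)ᗮ := h ▸ Submodule.mem_top
    rw [Submodule.mem_orthogonal_singleton_iff_inner_right] at he
    rw [real_inner_self_eq_norm_sq, he₀n] at he
    norm_num at he
  have hT0 : volume T = 0 := by
    rw [hTsub]
    exact Measure.addHaar_submodule _ _ hTne
  have hsub : ball (0 : EuclideanSpace ℝ (Fin n)) 1 \ T ⊆
      Function.support G ∩ ball (0 : EuclideanSpace ℝ (Fin n)) 1 := by
    rintro z ⟨hzb, hzT⟩
    refine ⟨?_, hzb⟩
    have hz0 : z ≠ 0 := by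
      intro h; exact hzT (by simp [hT, h])
    have hip : ⟪e₀, z⟫ ≠ 0 := fun h => hzT h
    have : 0 < G z := by
      apply div_pos
      · positivity
      · exact Real.rpow_pos_of_pos (norm_pos_iff.2 hz0) β
    exact this.ne'
  calc (0:ENNReal) < volume (ball (0 : EuclideanSpace ℝ (Fin n)) 1 \ T) := by
        rw [measure_diff_null hT0]
        exact measure_ball_pos volume 0 one_pos
    _ ≤ volume (Function.support G ∩ ball (0 : EuclideanSpace ℝ (Fin n)) 1) :=
        measure_mono hsub

end Aux

open Metric Set
open scoped RealInnerProductSpace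

set_option maxHeartbeats 1000000 in
/-- Lemma 3.6: for `n < β < n+2` there are constants `c₁, c₂ > 0`,
independent of `δ ∈ (0,1]`, with `m^{δ,β}(ν) ≤ max{−c₁‖ν‖^{β−n}, −c₂‖ν‖²}`. -/
theorem pdMultiplier_upper_bound (n : ℕ) (hn : 1 ≤ n) (β : ℝ)
    (hβ₁ : (n : ℝ) < β) (hβ₂ : β < (n : ℝ) + 2) :
    ∃ c₁ > (0 : ℝ), ∃ c₂ > (0 : ℝ), ∀ δ : ℝ, 0 < δ → δ ≤ 1 →
      ∀ ν : EuclideanSpace ℝ (Fin n),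
        pdMultiplier n δ β ν ≤ max (-c₁ * ‖ν‖ ^ (β - (n : ℝ))) (-c₂ * ‖ν‖ ^ 2) := by
  have hs : 0 < (n : ℝ) + 2 - β := by linarith
  have hβ0 : 0 < β := lt_of_le_of_lt (by positivity) hβ₁
  have hΓ : 0 < Real.Gamma ((n:ℝ)/2 + 1) := Real.Gamma_pos_of_pos (by positivity)
  have hπ : 0 < Real.pi ^ ((n:ℝ)/2) := Real.rpow_pos_of_pos Real.pi_pos _
  set A : ℝ := 2 * ((n:ℝ) + 2 - β) * Real.Gamma ((n:ℝ)/2 + 1) / (Real.pi ^ ((n:ℝ)/2)) with hA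
  have hA0 : 0 < A := by positivity
  set e₀ : EuclideanSpace ℝ (Fin n) := EuclideanSpace.single (⟨0, hn⟩ : Fin n) (1:ℝ) with he₀
  set J1 : ℝ := ∫ z in ball (0 : EuclideanSpace ℝ (Fin n)) 1, ⟪e₀, z⟫^2 / ‖z‖ ^ β with hJ1
  have hJ1pos : 0 < J1 := pd_quad_pos hn hβ₂
  set c : ℝ := (43/96) * A * J1 with hc
  have hc0 : 0 < c := by positivity
  refine ⟨c, hc0, c, hc0, ?_⟩
  intro δ hδ hδ1 ν
  have hconst : pdConst n δ β = A / δ ^ ((n:ℝ) + 2 - β) := by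
    rw [pdConst, hA, div_div]
  have hδs : 0 < δ ^ ((n:ℝ) + 2 - β) := Real.rpow_pos_of_pos hδ _
  have hconstpos : 0 < pdConst n δ β := by rw [hconst]; positivity
  by_cases hν : ν = 0
  · subst hν
    have h0 : pdMultiplier n δ β 0 = 0 := by
      rw [pdMultiplier]
      have : ∀ z : EuclideanSpace ℝ (Fin n),
          (Real.cos (inner ℝ (0 : EuclideanSpace ℝ (Fin n)) z) - 1) / ‖z‖ ^ β = 0 := by
        intro z
        rw [inner_zero_left, Real.cos_zero, sub_self, zero_div]
      rw [integral_congr_ae (Filter.Eventually.of_forall this), integral_zero, mul_zero]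
    rw [h0, norm_zero, Real.zero_rpow (by intro h; linarith [sub_eq_zero.mp h] : β - (n:ℝ) ≠ 0)]
    simp
  · -- main case
    have hνpos : 0 < ‖ν‖ := norm_pos_iff.2 hν
    set r : ℝ := min δ ‖ν‖⁻¹ with hr
    have hrpos : 0 < r := lt_min hδ (by positivity)
    have hrδ : r ≤ δ := min_le_left _ _
    set f : EuclideanSpace ℝ (Fin n) → ℝ := fun z => (Real.cos ⟪ν, z⟫ - 1) / ‖z‖ ^ β with hfdef
    set Q : EuclideanSpace ℝ (Fin n) → ℝ := fun z => ⟪ν, z⟫^2 / ‖z‖ ^ β with hQdef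
    have hnumc : Continuous fun z : EuclideanSpace ℝ (Fin n) => Real.cos ⟪ν, z⟫ - 1 :=
      (Real.continuous_cos.comp (continuous_const.inner continuous_id)).sub continuous_const
    have hnumb : ∀ z : EuclideanSpace ℝ (Fin n),
        |Real.cos ⟪ν, z⟫ - 1| ≤ (‖ν‖^2/2) * ‖z‖^2 := by
      intro z
      have h1 := pd_abs_cos_sub_one_le ⟪ν, z⟫
      have h2 := abs_real_inner_le_norm ν z
      have h3 : ⟪ν, z⟫^2 ≤ (‖ν‖ * ‖z‖)^2 := by
        nlinarith [abs_nonneg ⟪ν, z⟫, sq_abs ⟪ν, z⟫, norm_nonneg ν, norm_nonneg z]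
      nlinarith
    have hfint : IntegrableOn f (ball (0 : EuclideanSpace ℝ (Fin n)) δ) :=
      pd_integrableOn_div_rpow hn hβ₂ hδ hnumc hnumb
    have hQc : Continuous fun z : EuclideanSpace ℝ (Fin n) => ⟪ν, z⟫^2 :=
      (continuous_const.inner continuous_id).pow 2
    have hQb : ∀ z : EuclideanSpace ℝ (Fin n), |⟪ν, z⟫^2| ≤ ‖ν‖^2 * ‖z‖^2 := by
      intro z
      have h2 := abs_real_inner_le_norm ν z
      rw [abs_of_nonneg (sq_nonneg _)]
      nlinarith [abs_nonneg ⟪ν, z⟫, sq_abs ⟪ν, z⟫, norm_nonneg ν, norm_nonneg z]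
    have hQint : IntegrableOn Q (ball (0 : EuclideanSpace ℝ (Fin n)) δ) :=
      pd_integrableOn_div_rpow hn hβ₂ hδ hQc hQb
    have hfle0 : ∀ z, f z ≤ 0 := by
      intro z
      apply div_nonpos_iff.mpr
      exact Or.inr ⟨sub_nonpos.2 (Real.cos_le_one _), Real.rpow_nonneg (norm_nonneg _) _⟩
    -- Step 1 : shrink the domain
    have step1 : (∫ z in ball (0 : EuclideanSpace ℝ (Fin n)) δ, f z)
        ≤ ∫ z in ball (0 : EuclideanSpace ℝ (Fin n)) r, f z := by
      have hmono := setIntegral_mono_set (hfint.neg)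
        (ae_restrict_of_ae (Filter.Eventually.of_forall fun z => neg_nonneg.2 (hfle0 z)))
        ((ball_subset_ball hrδ).eventuallyLE)
      simp only [Pi.neg_apply, integral_neg] at hmono
      linarith
    -- Step 2 : pointwise quadratic bound on the small ball
    have step2 : (∫ z in ball (0 : EuclideanSpace ℝ (Fin n)) r, f z)
        ≤ ∫ z in ball (0 : EuclideanSpace ℝ (Fin n)) r, -(43/96) * Q z := by
      refine setIntegral_mono_on (hfint.mono_set (ball_subset_ball hrδ))
        ((hQint.mono_set (ball_subset_ball hrδ)).const_mul _) measurableSet_ball ?_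
      intro z hz
      have hzr : ‖z‖ < r := by simpa [dist_eq_norm] using hz
      have ht : |⟪ν, z⟫| ≤ 1 := by
        have h2 := abs_real_inner_le_norm ν z
        have h3 : ‖ν‖ * ‖z‖ ≤ ‖ν‖ * ‖ν‖⁻¹ := by
          apply mul_le_mul_of_nonneg_left _ (norm_nonneg ν)
          exact le_of_lt (lt_of_lt_of_le hzr (min_le_right _ _))
        rw [mul_inv_cancel₀ hνpos.ne'] at h3
        linarith
      have hcos := pd_cos_sub_one_le_neg_sq ht
      rcases eq_or_ne z 0 with rfl | hz0
      · have : ⟪ν, (0 : EuclideanSpace ℝ (Fin n))⟫ = 0 := inner_zero_right ν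
        simp only [hfdef, hQdef, this, Real.cos_zero, sub_self, zero_div, zero_pow, mul_zero]
        norm_num
      · have hd : 0 < ‖z‖ ^ β := Real.rpow_pos_of_pos (norm_pos_iff.2 hz0) β
        calc f z ≤ (-(43/96) * ⟪ν, z⟫^2) / ‖z‖ ^ β := by
              show (Real.cos ⟪ν, z⟫ - 1) / ‖z‖ ^ β ≤ _
              gcongr
          _ = -(43/96) * Q z := by rw [hQdef, mul_div_assoc]
    -- Step 3 : evaluate the quadratic integral
    have step3 : (∫ z in ball (0 : EuclideanSpace ℝ (Fin n)) r, -(43/96) * Q z)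
        = -(43/96) * (‖ν‖^2 * (r ^ ((n:ℝ) + 2 - β) * J1)) := by
      simp only [hQdef]
      rw [integral_const_mul]
      congr 1
      rw [pd_quad_integral_eq hn β r hν]
      congr 1
      rw [← he₀, pd_quad_scaling hrpos e₀, ← hJ1]
    -- combine
    have hIle : (∫ z in ball (0 : EuclideanSpace ℝ (Fin n)) δ, f z)
        ≤ -(43/96) * (‖ν‖^2 * (r ^ ((n:ℝ) + 2 - β) * J1)) := by
      rw [← step3]; exact le_trans step1 step2
    have hmain : pdMultiplier n δ β ν
        ≤ pdConst n δ β * (-(43/96) * (‖ν‖^2 * (r ^ ((n:ℝ) + 2 - β) * J1))) := by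
      rw [pdMultiplier]
      exact mul_le_mul_of_nonneg_left hIle hconstpos.le
    rw [hconst] at hmain
    have hrw : A / δ ^ ((n:ℝ) + 2 - β) * (-(43/96) * (‖ν‖^2 * (r ^ ((n:ℝ) + 2 - β) * J1)))
        = -(c * ‖ν‖^2 * (r ^ ((n:ℝ) + 2 - β) / δ ^ ((n:ℝ) + 2 - β))) := by
      rw [hc]; field_simp
    rw [hrw] at hmain
    -- case split on the size of ‖ν‖
    by_cases hcase : δ * ‖ν‖ ≤ 1
    · -- small frequency : r = δ
      have hδν : δ ≤ ‖ν‖⁻¹ := by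
        rw [inv_eq_one_div, le_div_iff₀ hνpos]
        exact hcase
      have hreq : r = δ := min_eq_left hδν
      rw [hreq, div_self hδs.ne'] at hmain
      refine le_trans hmain (le_trans (le_of_eq ?_) (le_max_right _ _))
      ring
    · -- large frequency : r = ‖ν‖⁻¹
      push_neg at hcase
      have hδν : ‖ν‖⁻¹ ≤ δ := by
        rw [inv_eq_one_div, div_le_iff₀ hνpos]
        nlinarith
      have hreq : r = ‖ν‖⁻¹ := min_eq_right hδν
      refine le_trans hmain (le_trans ?_ (le_max_left _ _))
      -- - (c ‖ν‖² (‖ν‖⁻¹)^s / δ^s) ≤ -c ‖ν‖^(β-n)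
      have hkey : ‖ν‖^2 * (r ^ ((n:ℝ) + 2 - β) / δ ^ ((n:ℝ) + 2 - β))
          = ‖ν‖ ^ (β - (n:ℝ)) * δ ^ (-((n:ℝ) + 2 - β)) := by
        rw [hreq]
        calc ‖ν‖^2 * ((‖ν‖⁻¹) ^ ((n:ℝ) + 2 - β) / δ ^ ((n:ℝ) + 2 - β))
            = ‖ν‖ ^ (2:ℝ) * (‖ν‖ ^ (-((n:ℝ) + 2 - β)) * δ ^ (-((n:ℝ) + 2 - β))) := by
              rw [Real.rpow_two, Real.inv_rpow (norm_nonneg ν),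
                ← Real.rpow_neg (norm_nonneg ν), div_eq_mul_inv,
                ← Real.rpow_neg hδ.le]
          _ = (‖ν‖ ^ (2:ℝ) * ‖ν‖ ^ (-((n:ℝ) + 2 - β))) * δ ^ (-((n:ℝ) + 2 - β)) := by ring
          _ = ‖ν‖ ^ ((2:ℝ) + -((n:ℝ) + 2 - β)) * δ ^ (-((n:ℝ) + 2 - β)) := by
              rw [Real.rpow_add hνpos]
          _ = ‖ν‖ ^ (β - (n:ℝ)) * δ ^ (-((n:ℝ) + 2 - β)) := by
              congr 2
              ring
      have hδbig : 1 ≤ δ ^ (-((n:ℝ) + 2 - β)) :=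
        Real.one_le_rpow_of_pos_of_le_one_of_nonpos hδ hδ1 (by linarith)
      have hνβ : 0 ≤ ‖ν‖ ^ (β - (n:ℝ)) := Real.rpow_nonneg (norm_nonneg ν) _
      nlinarith [hkey, mul_nonneg (mul_nonneg hc0.le hνβ) (sub_nonneg.2 hδbig)]
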